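/- For a partition μ of length l, the following multiset identity holds: the multiset of hook lengths {h(x) : x ∈ μ} together with the multiset {μᵢ - μⱼ + j - i : 1 ≤ i < j ≤ l} equals the multiset {j - i + l : 1 ≤ i ≤ l, 1 ≤ j ≤ μᵢ} together with {j - i : 1 ≤ i < j ≤ l}. Equivalently, as generating polynomials in t: Σ_{x∈μ} t^{h(x)} + Σ_{i<j} t^{μᵢ-μⱼ+j-i} = Σ_{i=1}^{l} Σ_{j=1}^{μᵢ - i + l} t^j. -/
import Mathlib


open Finset Polynomial

private lemma c_ge (l : ℕ) (μ : ℕ → ℕ) (hmono : ∀ i j, i ≤ j → μ j ≤ μ i)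
    (k j : ℕ) (hk : k < l) (h : j + 1 ≤ μ k) :
    k + 1 ≤ ((range l).filter fun r => j + 1 ≤ μ r).card := by
  have hsub : range (k + 1) ⊆ (range l).filter fun r => j + 1 ≤ μ r := by
    intro r hr
    simp only [mem_range] at hr
    simp only [mem_filter, mem_range]
    exact ⟨lt_of_le_of_lt (Nat.lt_succ_iff.mp hr) hk,
      le_trans h (hmono r k (Nat.lt_succ_iff.mp hr))⟩
  calc k + 1 = (range (k + 1)).card := (card_range _).symm
    _ ≤ _ := card_le_card hsub

private lemma c_le (l : ℕ) (μ : ℕ → ℕ) (hmono : ∀ i j, i ≤ j → μ j ≤ μ i)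
    (k j : ℕ) (h : μ k ≤ j) :
    ((range l).filter fun r => j + 1 ≤ μ r).card ≤ k := by
  have hsub : ((range l).filter fun r => j + 1 ≤ μ r) ⊆ range k := by
    intro r hr
    simp only [mem_filter, mem_range] at hr
    simp only [mem_range]
    by_contra hc
    push_neg at hc
    have := hmono k r hc
    omega
  calc _ ≤ (range k).card := card_le_card hsub
    _ = k := card_range _

private lemma c_mono (l : ℕ) (μ : ℕ → ℕ) (j₁ j₂ : ℕ) (h : j₁ ≤ j₂) :
    ((range l).filter fun r => j₂ + 1 ≤ μ r).card ≤
      ((range l).filter fun r => j₁ + 1 ≤ μ r).card := by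
  apply card_le_card
  intro r hr
  simp only [mem_filter] at hr ⊢
  exact ⟨hr.1, by omega⟩

private lemma row_identity (l : ℕ) (μ : ℕ → ℕ)
    (hmono : ∀ i j, i ≤ j → μ j ≤ μ i) (i : ℕ) (hi : i < l) :
    (∑ j ∈ range (μ i),
        (X : Polynomial ℤ) ^ (μ i + (((range l).filter fun r => j + 1 ≤ μ r).card) - (i + j + 1)))
      + ∑ j ∈ Ioo i l, (X : Polynomial ℤ) ^ (μ i - μ j + (j - i))
      = ∑ j ∈ range (μ i + (l - (i + 1))), (X : Polynomial ℤ) ^ (j + 1) := by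
  set c : ℕ → ℕ := fun j => ((range l).filter fun r => j + 1 ≤ μ r).card with hc
  set f : ℕ → ℕ := fun j => μ i + c j - (i + j + 1) with hf
  set g : ℕ → ℕ := fun k => μ i - μ k + (k - i) with hg
  set a : ℕ := μ i + (l - (i + 1)) with ha
  -- basic facts about c on row i
  have hcge : ∀ j, j < μ i → i + 1 ≤ c j := fun j hj => c_ge l μ hmono i j hi hj
  have hcle : ∀ j, c j ≤ l := by
    intro j
    calc c j ≤ (range l).card := card_le_card (filter_subset _ _)
      _ = l := card_range _
  -- injectivity of f on range (μ i)
  have hfinj : Set.InjOn f (range (μ i)) := by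
    have key : ∀ j₁ j₂, j₁ < j₂ → j₂ < μ i → f j₂ < f j₁ := by
      intro j₁ j₂ h12 h2
      have hm : c j₂ ≤ c j₁ := c_mono l μ j₁ j₂ (le_of_lt h12)
      have h1 := hcge j₂ h2
      simp only [hf]
      omega
    intro j₁ h1 j₂ h2 heq
    simp only [coe_range, Set.mem_Iio] at h1 h2
    rcases lt_trichotomy j₁ j₂ with h | h | h
    · exact absurd heq (by have := key j₁ j₂ h h2; omega)
    · exact h
    · exact absurd heq (by have := key j₂ j₁ h h1; omega)
  -- injectivity of g on Ioo i l
  have hginj : Set.InjOn g (Ioo i l) := by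
    have key : ∀ k₁ k₂, i < k₁ → k₁ < k₂ → g k₁ < g k₂ := by
      intro k₁ k₂ hk1 hk2
      have h1 : μ k₂ ≤ μ k₁ := hmono k₁ k₂ (le_of_lt hk2)
      have h2 : μ k₁ ≤ μ i := hmono i k₁ (le_of_lt hk1)
      simp only [hg]
      omega
    intro k₁ h1 k₂ h2 heq
    simp only [coe_Ioo, Set.mem_Ioo] at h1 h2
    rcases lt_trichotomy k₁ k₂ with h | h | h
    · exact absurd heq (by have := key k₁ k₂ h1.1 h; omega)
    · exact h
    · exact absurd heq (by have := key k₂ k₁ h2.1 h; omega)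
  set A : Finset ℕ := (range (μ i)).image f with hA
  set B : Finset ℕ := (Ioo i l).image g with hB
  -- A and B are disjoint
  have hdisj : Disjoint A B := by
    rw [Finset.disjoint_left]
    intro x hxA hxB
    simp only [hA, hB, mem_image, mem_range, mem_Ioo] at hxA hxB
    obtain ⟨j, hj, hfj⟩ := hxA
    obtain ⟨k, ⟨hik, hkl⟩, hgk⟩ := hxB
    have h1 := hcge j hj
    have h2 := hcle j
    have h3 : μ k ≤ μ i := hmono i k (le_of_lt hik)
    have h4 : j + 1 ≤ μ k → k + 1 ≤ c j := fun h => c_ge l μ hmono k j hkl h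
    have h5 : μ k ≤ j → c j ≤ k := fun h => c_le l μ hmono k j h
    simp only [hf] at hfj
    simp only [hg] at hgk
    rcases le_or_gt (μ k) j with h | h
    · have := h5 h; omega
    · have := h4 h; omega
  -- A ∪ B ⊆ Icc 1 a
  have hsub : A ∪ B ⊆ Icc 1 a := by
    intro x hx
    simp only [hA, hB, mem_union, mem_image, mem_range, mem_Ioo] at hx
    simp only [mem_Icc, ha]
    rcases hx with ⟨j, hj, hfj⟩ | ⟨k, ⟨hik, hkl⟩, hgk⟩
    · have h1 := hcge j hj
      have h2 := hcle j
      simp only [hf] at hfj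
      omega
    · have h3 : μ k ≤ μ i := hmono i k (le_of_lt hik)
      simp only [hg] at hgk
      omega
  -- cardinality
  have hcardA : A.card = μ i := by
    rw [hA, card_image_of_injOn hfinj, card_range]
  have hcardB : B.card = l - (i + 1) := by
    rw [hB, card_image_of_injOn hginj, Nat.card_Ioo]
    omega
  have hunion : A ∪ B = Icc 1 a := by
    apply Finset.eq_of_subset_of_card_le hsub
    rw [card_union_of_disjoint hdisj, hcardA, hcardB, Nat.card_Icc]
    omega
  have hsumA : (∑ j ∈ range (μ i), (X : Polynomial ℤ) ^ f j) = ∑ x ∈ A, (X : Polynomial ℤ) ^ x :=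
    (sum_image fun j hj k hk h => hfinj (by simpa using hj) (by simpa using hk) h).symm
  have hsumB : (∑ k ∈ Ioo i l, (X : Polynomial ℤ) ^ g k) = ∑ x ∈ B, (X : Polynomial ℤ) ^ x :=
    (sum_image fun j hj k hk h => hginj (by simpa using hj) (by simpa using hk) h).symm
  calc (∑ j ∈ range (μ i), (X : Polynomial ℤ) ^ f j) + ∑ k ∈ Ioo i l, (X : Polynomial ℤ) ^ g k
      = (∑ x ∈ A, (X : Polynomial ℤ) ^ x) + ∑ x ∈ B, (X : Polynomial ℤ) ^ x := by
        rw [hsumA, hsumB]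
    _ = ∑ x ∈ A ∪ B, (X : Polynomial ℤ) ^ x := (sum_union hdisj).symm
    _ = ∑ x ∈ Icc 1 a, (X : Polynomial ℤ) ^ x := by rw [hunion]
    _ = ∑ j ∈ range a, (X : Polynomial ℤ) ^ (j + 1) := by
        rw [show Icc 1 a = Ico 1 (a + 1) by rw [Finset.Ico_add_one_right_eq_Icc],
          Finset.sum_Ico_eq_sum_range]
        simp only [Nat.add_sub_cancel]
        exact Finset.sum_congr rfl fun j _ => by rw [add_comm]

/-- For a partition `μ` of length `l`, the generating polynomial identity
`Σ_{x∈μ} t^{h(x)} + Σ_{i<j} t^{μᵢ-μⱼ+j-i} = Σ_{i=1}^{l} Σ_{j=1}^{μᵢ-i+l} t^j`,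
expressing the multiset identity between hook lengths together with the numbers
`μᵢ - μⱼ + j - i` (for `i < j`) on one side, and the numbers `j - i + l`
(for `1 ≤ i ≤ l`, `1 ≤ j ≤ μᵢ`) together with `j - i` (for `i < j`) on the other. -/
theorem hook_multiset_identity (l : ℕ) (μ : ℕ → ℕ)
    (hmono : ∀ i j, i ≤ j → μ j ≤ μ i)
    (hsupp : ∀ i, l ≤ i → μ i = 0) :
    (∑ i ∈ range l, ∑ j ∈ range (μ i),
        (X : Polynomial ℤ) ^ (μ i + (((range l).filter fun r => j + 1 ≤ μ r).card) - (i + j + 1)))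
      + ∑ i ∈ range l, ∑ j ∈ Ioo i l, (X : Polynomial ℤ) ^ (μ i - μ j + (j - i))
      = ∑ i ∈ range l, ∑ j ∈ range (μ i + (l - (i + 1))), (X : Polynomial ℤ) ^ (j + 1) := by
  rw [← Finset.sum_add_distrib]
  exact Finset.sum_congr rfl fun i hi => row_identity l μ hmono i (mem_range.mp hi)
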